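/- Let K ⊂ ℝ be a compact set of box dimension d, let A = {ρ^j : j ≥ 0} for ρ ∈ (0,1), and let ψ : A × K → ℝ be given by ψ(ρ^j, x) = ρ^j x. If K ⊂ [c, C] with 0 < c, then the box dimension of ψ(A × K) = ⋃_{j≥0} ρ^j K is at most d. -/

import Mathlib

/-- The covering number of a set `s ⊆ ℝ` by balls of radius `ε`. -/
noncomputable def coverNum (s : Set ℝ) (ε : ℝ) : ℕ∞ :=
  ⨅ (t : Finset ℝ) (_ : s ⊆ ⋃ x ∈ t, Metric.ball x ε), (t.card : ℕ∞)

/-- The upper box (Minkowski) dimension of a set `s ⊆ ℝ`. -/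
noncomputable def upperBoxDim (s : Set ℝ) : ℝ :=
  Filter.limsup
    (fun n : ℕ => Real.log ((coverNum s (1 / (n + 1 : ℝ))).toNat : ℝ) /
      Real.log ((n : ℝ) + 1)) Filter.atTop

open Filter Real Metric Set

lemma coverNum_le {s : Set ℝ} {ε : ℝ} {t : Finset ℝ} (h : s ⊆ ⋃ x ∈ t, Metric.ball x ε) :
    coverNum s ε ≤ t.card := iInf₂_le t h

lemma le_coverNum {s : Set ℝ} {ε : ℝ} {n : ℕ∞}
    (h : ∀ t : Finset ℝ, (s ⊆ ⋃ x ∈ t, Metric.ball x ε) → n ≤ t.card) :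
    n ≤ coverNum s ε := le_iInf₂ h

lemma exists_optimal_cover {s : Set ℝ} {ε : ℝ}
    (hfin : ∃ t : Finset ℝ, s ⊆ ⋃ x ∈ t, Metric.ball x ε) :
    ∃ t : Finset ℝ, (s ⊆ ⋃ x ∈ t, Metric.ball x ε) ∧ (t.card : ℕ∞) = coverNum s ε := by
  set S : Set ℕ := {n : ℕ | ∃ t : Finset ℝ, (s ⊆ ⋃ x ∈ t, Metric.ball x ε) ∧ t.card = n} with hS
  have hSne : S.Nonempty := by obtain ⟨t, ht⟩ := hfin; exact ⟨t.card, t, ht, rfl⟩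
  obtain ⟨t, ht, hcard⟩ := Nat.sInf_mem hSne
  refine ⟨t, ht, le_antisymm ?_ (coverNum_le ht)⟩
  refine le_coverNum fun t' ht' => ?_
  have : sInf S ≤ t'.card := Nat.sInf_le ⟨t', ht', rfl⟩
  exact_mod_cast hcard ▸ this

lemma one_le_coverNum {s : Set ℝ} {ε : ℝ} (hs : s.Nonempty) : 1 ≤ coverNum s ε := by
  refine le_coverNum fun t ht => ?_
  obtain ⟨x, hx⟩ := hs
  obtain ⟨y, hy, -⟩ := Set.mem_iUnion₂.1 (ht hx)
  have : 1 ≤ t.card := Finset.card_pos.2 ⟨y, hy⟩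
  exact_mod_cast this

lemma exists_cover_Icc {c C ε : ℝ} (hcc : c ≤ C) (hε : 0 < ε) :
    ∃ t : Finset ℝ, (Set.Icc c C ⊆ ⋃ x ∈ t, Metric.ball x ε) ∧
      t.card ≤ ⌊(C - c) / ε⌋₊ + 1 := by
  refine ⟨(Finset.range (⌊(C - c) / ε⌋₊ + 1)).image (fun k : ℕ => c + ε * (k:ℝ)), ?_, ?_⟩
  · intro x hx
    obtain ⟨hxc, hxC⟩ := hx
    set k := ⌊(x - c) / ε⌋₊ with hk
    have hxc' : 0 ≤ (x - c) / ε := div_nonneg (by linarith) hε.le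
    refine Set.mem_iUnion₂.2 ⟨c + ε * k, ?_, ?_⟩
    · refine Finset.mem_image.2 ⟨k, ?_, rfl⟩
      refine Finset.mem_range.2 (Nat.lt_succ_of_le (Nat.floor_le_floor ?_))
      gcongr
    · rw [mem_ball, Real.dist_eq, abs_lt]
      have h1 : (k : ℝ) ≤ (x - c) / ε := Nat.floor_le hxc'
      have h2 : (x - c) / ε < k + 1 := Nat.lt_floor_add_one _
      have h1' : (k:ℝ) * ε ≤ x - c := (le_div_iff₀ hε).1 h1
      have h2' : x - c < ((k:ℝ) + 1) * ε := (div_lt_iff₀ hε).1 h2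
      constructor <;> nlinarith
  · exact (Finset.card_image_le).trans (by simp)

lemma cover_union_bound {K : Set ℝ} {ρ c C ε : ℝ} (hKsub : K ⊆ Set.Icc c C) (hc : 0 < c)
    (hρ0 : 0 < ρ) (hρ1 : ρ < 1) (hC : 0 < C) (hε : 0 < ε) {t : Finset ℝ}
    (ht : K ⊆ ⋃ x ∈ t, Metric.ball x ε) {m : ℕ} (hm : Real.logb ρ (ε / C) < m) :
    coverNum (⋃ j : ℕ, (fun x => ρ ^ j * x) '' K) ε ≤ ((1 + m * t.card : ℕ) : ℕ∞) := by
  classical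
  set T : Finset ℝ :=
    insert (ε/2) ((Finset.range m).biUnion fun j => t.image fun x => ρ ^ j * x) with hT
  have tail : ∀ j : ℕ, m ≤ j → ρ ^ j * C < ε := by
    intro j hj
    have h1 : ρ ^ j ≤ ρ ^ m := pow_le_pow_of_le_one hρ0.le hρ1.le hj
    have h2 : (ρ : ℝ) ^ (m : ℝ) < ρ ^ Real.logb ρ (ε / C) :=
      Real.rpow_lt_rpow_of_exponent_gt hρ0 hρ1 hm
    rw [Real.rpow_logb hρ0 hρ1.ne (div_pos hε hC), Real.rpow_natCast] at h2
    have h3 : ρ ^ j < ε / C := lt_of_le_of_lt h1 h2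
    calc ρ ^ j * C < (ε / C) * C := mul_lt_mul_of_pos_right h3 hC
      _ = ε := div_mul_cancel₀ _ hC.ne'
  have hcov : (⋃ j : ℕ, (fun x => ρ ^ j * x) '' K) ⊆ ⋃ x ∈ T, Metric.ball x ε := by
    intro y hy
    obtain ⟨j, x, hx, rfl⟩ := by
      simpa only [Set.mem_iUnion, Set.mem_image] using hy
    by_cases hj : j < m
    · obtain ⟨z, hz, hxz⟩ := Set.mem_iUnion₂.1 (ht hx)
      refine Set.mem_iUnion₂.2 ⟨ρ ^ j * z, ?_, ?_⟩
      · refine Finset.mem_insert.2 (Or.inr ?_)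
        exact Finset.mem_biUnion.2 ⟨j, Finset.mem_range.2 hj,
          Finset.mem_image.2 ⟨z, hz, rfl⟩⟩
      · rw [mem_ball, Real.dist_eq] at hxz ⊢
        have : ρ ^ j * x - ρ ^ j * z = ρ ^ j * (x - z) := by ring
        rw [this, abs_mul, abs_of_nonneg (pow_nonneg hρ0.le j)]
        calc ρ ^ j * |x - z| ≤ 1 * |x - z| :=
              mul_le_mul_of_nonneg_right (pow_le_one₀ hρ0.le hρ1.le) (abs_nonneg _)
          _ = |x - z| := one_mul _
          _ < ε := hxz
    · push_neg at hj
      refine Set.mem_iUnion₂.2 ⟨ε/2, Finset.mem_insert_self _ _, ?_⟩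
      have hx' := hKsub hx
      have hpos : 0 < ρ ^ j * x :=
        mul_pos (pow_pos hρ0 j) (lt_of_lt_of_le hc hx'.1)
      have hup : ρ ^ j * x < ε :=
        lt_of_le_of_lt (mul_le_mul_of_nonneg_left hx'.2 (pow_nonneg hρ0.le j)) (tail j hj)
      rw [mem_ball, Real.dist_eq, abs_lt]
      constructor <;> [linarith; linarith]
  refine (coverNum_le hcov).trans ?_
  have hcard : T.card ≤ 1 + m * t.card := by
    refine (Finset.card_insert_le _ _).trans ?_
    rw [add_comm]
    refine Nat.add_le_add_left ((Finset.card_biUnion_le).trans ?_) 1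
    calc (∑ j ∈ Finset.range m, (t.image fun x => ρ ^ j * x).card)
        ≤ ∑ _j ∈ Finset.range m, t.card :=
          Finset.sum_le_sum fun j _ => Finset.card_image_le
      _ = m * t.card := by simp [Finset.sum_const, mul_comm]
  exact_mod_cast hcard

theorem stmt18 (K : Set ℝ) (ρ c C d : ℝ) (hK : IsCompact K)
    (hKsub : K ⊆ Set.Icc c C) (hc : 0 < c) (hρ : ρ ∈ Set.Ioo (0 : ℝ) 1)
    (hdim : upperBoxDim K = d) :
    upperBoxDim (⋃ j : ℕ, (fun x => ρ ^ j * x) '' K) ≤ d := by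
  obtain ⟨hρ0, hρ1⟩ := hρ
  rcases K.eq_empty_or_nonempty with hKe | ⟨x₀, hx₀⟩
  · simp only [hKe, Set.image_empty, Set.iUnion_empty]
    rw [hKe] at hdim
    exact hdim.le
  have hcC : c ≤ C := (hKsub hx₀).1.trans (hKsub hx₀).2
  have hC : 0 < C := hc.trans_le hcC
  have hlogρ : Real.log ρ ≠ 0 := (Real.log_neg hρ0 hρ1).ne
  have hL : 0 < -Real.log ρ := neg_pos.2 (Real.log_neg hρ0 hρ1)
  set L : ℝ := -Real.log ρ with hLdef
  clear_value L
  set U := ⋃ j : ℕ, (fun x => ρ ^ j * x) '' K with hUdef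
  have hUne : U.Nonempty := ⟨x₀, Set.mem_iUnion.2 ⟨0, ⟨x₀, hx₀, by simp⟩⟩⟩
  rw [upperBoxDim] at hdim ⊢
  set fK : ℕ → ℝ := fun n : ℕ => Real.log ((coverNum K (1 / (n + 1 : ℝ))).toNat : ℝ) /
      Real.log ((n : ℝ) + 1) with hfKdef
  set fU : ℕ → ℝ := fun n : ℕ => Real.log ((coverNum U (1 / (n + 1 : ℝ))).toNat : ℝ) /
      Real.log ((n : ℝ) + 1) with hfUdef
  set m : ℕ → ℕ := fun n => ⌊Real.logb ρ ((1 / ((n:ℝ) + 1)) / C)⌋₊ + 1 with hmdef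
  have hεpos : ∀ n : ℕ, 0 < 1 / ((n:ℝ) + 1) := fun n => by positivity
  have htend : Tendsto (fun n : ℕ => (n:ℝ) + 1) atTop atTop :=
    tendsto_atTop_add_const_right _ 1 tendsto_natCast_atTop_atTop
  have hlogtend : Tendsto (fun n : ℕ => Real.log ((n:ℝ) + 1)) atTop atTop :=
    Real.tendsto_log_atTop.comp htend
  -- explicit covers of K at each scale
  have hcovfin : ∀ n : ℕ, ∃ t0 : Finset ℝ,
      (K ⊆ ⋃ x ∈ t0, Metric.ball x (1 / ((n:ℝ) + 1))) ∧
      t0.card ≤ ⌊(C - c) * ((n:ℝ) + 1)⌋₊ + 1 := by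
    intro n
    obtain ⟨t0, h1, h2⟩ := exists_cover_Icc hcC (hεpos n)
    have heq : (C - c) / (1 / ((n:ℝ) + 1)) = (C - c) * ((n:ℝ) + 1) := by
      field_simp
    rw [heq] at h2
    exact ⟨t0, fun x hx => h1 (hKsub hx), h2⟩
  have hNK1 : ∀ n : ℕ, 1 ≤ (coverNum K (1 / ((n:ℝ) + 1))).toNat := by
    intro n
    obtain ⟨t0, ht0, -⟩ := hcovfin n
    have hne : coverNum K (1 / ((n:ℝ) + 1)) ≠ ⊤ :=
      ne_top_of_le_ne_top (by simp) (coverNum_le ht0)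
    have h1 : 1 ≤ coverNum K (1 / ((n:ℝ) + 1)) := one_le_coverNum ⟨x₀, hx₀⟩
    rw [← ENat.coe_toNat hne] at h1
    exact_mod_cast h1
  -- main per-n quantitative bound
  have hmain : ∀ n : ℕ, 1 ≤ (coverNum U (1 / ((n:ℝ) + 1))).toNat ∧
      ((coverNum U (1 / ((n:ℝ) + 1))).toNat : ℝ) ≤
        ((m n : ℝ) + 1) * ((coverNum K (1 / ((n:ℝ) + 1))).toNat : ℝ) := by
    intro n
    obtain ⟨t0, ht0, -⟩ := hcovfin n
    obtain ⟨t, htcov, htopt⟩ := exists_optimal_cover ⟨t0, ht0⟩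
    have hNKcard : (coverNum K (1 / ((n:ℝ) + 1))).toNat = t.card := by
      rw [← htopt]; simp
    have hmlt : Real.logb ρ ((1 / ((n:ℝ) + 1)) / C) < (m n : ℝ) := by
      rw [hmdef]; push_cast; exact Nat.lt_floor_add_one _
    have hcovU := cover_union_bound hKsub hc hρ0 hρ1 hC (hεpos n) htcov hmlt
    rw [← hUdef] at hcovU
    have hfin : coverNum U (1 / ((n:ℝ) + 1)) ≠ ⊤ :=
      ne_top_of_le_ne_top (ENat.coe_ne_top _) hcovU
    have h1 : 1 ≤ coverNum U (1 / ((n:ℝ) + 1)) := one_le_coverNum hUne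
    have hNU1 : 1 ≤ (coverNum U (1 / ((n:ℝ) + 1))).toNat := by
      rw [← ENat.coe_toNat hfin] at h1; exact_mod_cast h1
    have hNU_le : (coverNum U (1 / ((n:ℝ) + 1))).toNat ≤ 1 + m n * t.card := by
      have := ENat.toNat_le_toNat hcovU (ENat.coe_ne_top _)
      simpa only [ENat.toNat_coe] using this
    have htcard1 : 1 ≤ t.card := by
      obtain ⟨y, hy, -⟩ := Set.mem_iUnion₂.1 (htcov hx₀)
      exact Finset.card_pos.2 ⟨y, hy⟩
    refine ⟨hNU1, ?_⟩
    have hstep : 1 + m n * t.card ≤ (m n + 1) * t.card := by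
      have := Nat.add_le_add_right htcard1 (m n * t.card)
      calc 1 + m n * t.card ≤ t.card + m n * t.card := this
        _ = (m n + 1) * t.card := by ring
    have : (coverNum U (1 / ((n:ℝ) + 1))).toNat ≤ (m n + 1) * t.card := hNU_le.trans hstep
    rw [hNKcard]
    exact_mod_cast this
  -- reduce to showing limsup ≤ d + δ for every δ > 0
  refine le_of_forall_sub_le fun δ hδ => sub_le_iff_le_add.2 ?_
  have hXtend : Tendsto (fun n : ℕ => ((n:ℝ) + 1) ^ δ) atTop atTop :=
    (tendsto_rpow_atTop hδ).comp htend
  have hA : ∀ᶠ n : ℕ in atTop, Real.log ((n:ℝ) + 1) ≤ (L/3) * ((n:ℝ) + 1) ^ δ := by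
    have hlo := (isLittleO_log_rpow_atTop hδ).comp_tendsto htend
    have h2 := hlo.def (by positivity : (0:ℝ) < L/3)
    filter_upwards [h2] with n hn
    simp only [Function.comp] at hn
    rwa [Real.norm_eq_abs, Real.norm_eq_abs,
      abs_of_nonneg (Real.log_nonneg (by exact_mod_cast le_add_of_nonneg_left n.cast_nonneg)),
      abs_of_nonneg (Real.rpow_nonneg (by positivity) _)] at hn
  have hB : ∀ᶠ n : ℕ in atTop, Real.log C / L + 3 ≤ (2/3) * ((n:ℝ) + 1) ^ δ := by
    filter_upwards [hXtend.eventually_ge_atTop ((3/2) * (Real.log C / L + 3))] with n hn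
    linarith
  have hCev : ∀ᶠ n : ℕ in atTop, -Real.log C ≤ Real.log ((n:ℝ) + 1) :=
    hlogtend.eventually_ge_atTop _
  have hD : ∀ᶠ n : ℕ in atTop, (0:ℝ) < Real.log ((n:ℝ) + 1) :=
    hlogtend.eventually_gt_atTop 0
  have hform : ∀ n : ℕ, Real.logb ρ ((1 / ((n:ℝ) + 1)) / C) =
      (Real.log ((n:ℝ) + 1) + Real.log C) / L := by
    intro n
    rw [Real.logb, Real.log_div (by positivity) hC.ne', one_div, Real.log_inv, hLdef]
    rw [div_neg]
    field_simp
    ring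
  have hF1 : ∀ᶠ n : ℕ in atTop, ((m n : ℝ) + 1) ≤ ((n:ℝ) + 1) ^ δ := by
    filter_upwards [hA, hB, hCev] with n hAn hBn hCn
    have h0 : 0 ≤ Real.logb ρ ((1 / ((n:ℝ) + 1)) / C) := by
      rw [hform n]; exact div_nonneg (by linarith) hL.le
    have hfl : (⌊Real.logb ρ ((1 / ((n:ℝ) + 1)) / C)⌋₊ : ℝ) ≤
        (Real.log ((n:ℝ) + 1) + Real.log C) / L := by
      rw [← hform n]; exact Nat.floor_le h0
    have e1 : Real.log ((n:ℝ) + 1) / L ≤ ((n:ℝ) + 1) ^ δ / 3 := by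
      rw [div_le_div_iff₀ hL (by norm_num : (0:ℝ) < 3)]
      nlinarith
    have hsum : (Real.log ((n:ℝ) + 1) + Real.log C) / L =
        Real.log ((n:ℝ) + 1) / L + Real.log C / L := add_div _ _ _
    have hcast : ((m n : ℝ) + 1) = (⌊Real.logb ρ ((1 / ((n:ℝ) + 1)) / C)⌋₊ : ℝ) + 2 := by
      rw [hmdef]; push_cast; ring
    rw [hcast]
    linarith
  -- fK is eventually between 0 and 2
  have hfK0 : ∀ᶠ n : ℕ in atTop, 0 ≤ fK n := by
    filter_upwards [hD] with n hDn
    refine div_nonneg (Real.log_nonneg ?_) hDn.le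
    exact_mod_cast hNK1 n
  have hfK2 : ∀ᶠ n : ℕ in atTop, fK n ≤ 2 := by
    filter_upwards [hD, tendsto_natCast_atTop_atTop.eventually_ge_atTop (C - c),
      tendsto_natCast_atTop_atTop.eventually_ge_atTop (1:ℝ)] with n hDn hn1 hn2
    obtain ⟨t0, ht0, ht0c⟩ := hcovfin n
    have h1 : coverNum K (1 / ((n:ℝ) + 1)) ≤ (t0.card : ℕ∞) := coverNum_le ht0
    have h2 : (coverNum K (1 / ((n:ℝ) + 1))).toNat ≤ t0.card := by
      have := ENat.toNat_le_toNat h1 (by simp); simpa using this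
    have h3 : ((coverNum K (1 / ((n:ℝ) + 1))).toNat : ℝ) ≤
        (C - c) * ((n:ℝ) + 1) + 1 := by
      have h4 : (t0.card : ℝ) ≤ (⌊(C - c) * ((n:ℝ) + 1)⌋₊ : ℝ) + 1 := by exact_mod_cast ht0c
      have h5 : (⌊(C - c) * ((n:ℝ) + 1)⌋₊ : ℝ) ≤ (C - c) * ((n:ℝ) + 1) :=
        Nat.floor_le (mul_nonneg (by linarith) (by positivity))
      have h6 : ((coverNum K (1 / ((n:ℝ) + 1))).toNat : ℝ) ≤ (t0.card : ℝ) := by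
        exact_mod_cast h2
      linarith
    have h7 : ((coverNum K (1 / ((n:ℝ) + 1))).toNat : ℝ) ≤ ((n:ℝ) + 1) ^ 2 := by
      nlinarith
    have h8 : Real.log ((coverNum K (1 / ((n:ℝ) + 1))).toNat : ℝ) ≤
        2 * Real.log ((n:ℝ) + 1) := by
      have hpos : (0:ℝ) < ((coverNum K (1 / ((n:ℝ) + 1))).toNat : ℝ) := by
        exact_mod_cast hNK1 n
      have := Real.log_le_log hpos h7
      rwa [Real.log_pow] at this
      
    rw [hfKdef]
    simp only
    rw [div_le_iff₀ hDn]
    linarith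
  have hfU0 : ∀ᶠ n : ℕ in atTop, 0 ≤ fU n := by
    filter_upwards [hD] with n hDn
    refine div_nonneg (Real.log_nonneg ?_) hDn.le
    exact_mod_cast (hmain n).1
  -- main eventual comparison
  have hev : ∀ᶠ n : ℕ in atTop, fU n ≤ fK n + δ := by
    filter_upwards [hF1, hD] with n h1 hDn
    obtain ⟨hNU1, hNUle⟩ := hmain n
    have hNUpos : (0:ℝ) < ((coverNum U (1 / ((n:ℝ) + 1))).toNat : ℝ) := by
      exact_mod_cast hNU1
    have hNKpos : (0:ℝ) < ((coverNum K (1 / ((n:ℝ) + 1))).toNat : ℝ) := by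
      exact_mod_cast hNK1 n
    have hm1pos : (0:ℝ) < (m n : ℝ) + 1 := by positivity
    have hlog1 := Real.log_le_log hNUpos hNUle
    rw [Real.log_mul hm1pos.ne' hNKpos.ne'] at hlog1
    have hlog2 : Real.log ((m n : ℝ) + 1) ≤ δ * Real.log ((n:ℝ) + 1) := by
      have := Real.log_le_log hm1pos h1
      rwa [Real.log_rpow (by positivity)] at this
    rw [hfUdef, hfKdef]
    simp only
    rw [div_le_iff₀ hDn, add_mul, div_mul_cancel₀ _ hDn.ne']
    linarith
  -- limsup algebra
  have cobdd_fU : IsCoboundedUnder (· ≤ ·) atTop fU :=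
    isCoboundedUnder_le_of_eventually_le atTop hfU0
  have bdd_fK : IsBoundedUnder (· ≤ ·) atTop fK := ⟨2, eventually_map.2 hfK2⟩
  have cobdd_fK : IsCoboundedUnder (· ≤ ·) atTop fK :=
    isCoboundedUnder_le_of_eventually_le atTop hfK0
  have bdd' : IsBoundedUnder (· ≤ ·) atTop (fun n => fK n + δ) :=
    ⟨2 + δ, eventually_map.2 (hfK2.mono fun n h => by linarith)⟩
  calc limsup fU atTop ≤ limsup (fun n => fK n + δ) atTop :=
        limsup_le_limsup hev cobdd_fU bdd'
    _ = limsup fK atTop + δ := limsup_add_const atTop fK δ bdd_fK cobdd_fK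
    _ = d + δ := by rw [hdim]
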